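/- arXiv:1310.0343 — 3 statements merged into one kernel-verified Lean document; each statement's English description precedes it below -/
import Mathlib

section
/- Let a_0, …, a_m be positive integers. In the group ring ℚ[ℂ*], define δ(a_0,…,a_m) = (-1)^{m+1}(1 - ∑_{j≥1} s_j E_j), where s_j are defined by Möbius inversion from χ_j(a_0,…,a_m) = 1 - ∏_{a_i | j}(1-a_i), and E_j = (1/j)∑_{k=0}^{j-1}[ζ_j^k]. Then δ(a_0,…,a_m) · δ(a_0',…,a_{m'}') = δ(a_0,…,a_m, a_0',…,a_{m'}'). -/
open ArithmeticFunction

/-- The primitive `j`-th root of unity `e^{2πi/j}` as a unit of `ℂ`. -/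
noncomputable def zetaU (j : ℕ) : ℂˣ :=
  Units.mk0 (Complex.exp (2 * (Real.pi : ℂ) * Complex.I / (j : ℂ))) (Complex.exp_ne_zero _)

/-- The averaging element `E_j = (1/j)∑_{k=0}^{j-1}[ζ_j^k]` in the group ring `ℚ[ℂ*]`. -/
noncomputable def Eavg (j : ℕ) : MonoidAlgebra ℚ ℂˣ :=
  (j : ℚ)⁻¹ • ∑ k ∈ Finset.range j, MonoidAlgebra.of ℚ ℂˣ (zetaU j ^ k)

/-- `χ_j` for a tuple of exponents `L`: `χ_j = 1 - ∏_{a ∈ L, a ∣ j}(1 - a)`. -/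
def chiL (L : List ℕ) (j : ℕ) : ℚ :=
  1 - ((L.filter (fun a => a ∣ j)).map (fun a => 1 - (a : ℚ))).prod

/-- `s_j`, defined from `χ_j` by Möbius inversion. -/
def sL (L : List ℕ) (j : ℕ) : ℚ :=
  ∑ d ∈ j.divisors, ((ArithmeticFunction.moebius (j / d) : ℤ) : ℚ) * chiL L d

/-- The least common multiple of the entries of `L`. -/
def lcmL (L : List ℕ) : ℕ := L.foldr Nat.lcm 1

/-- The Milnor–Orlik element `δ(a_0,…,a_m) = (-1)^{m+1}(1 - ∑_{j≥1} s_j E_j)` of `ℚ[ℂ*]`;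
the sum is finite since `s_j = 0` unless `j` divides the period `lcm_i a_i`. -/
noncomputable def deltaMO (L : List ℕ) : MonoidAlgebra ℚ ℂˣ :=
  ((-1 : ℚ) ^ L.length) •
    ((1 : MonoidAlgebra ℚ ℂˣ) - ∑ j ∈ (lcmL L).divisors, sL L j • Eavg j)

lemma zetaU_coe (j : ℕ) : (zetaU j : ℂ) = Complex.exp (2 * (Real.pi:ℂ) * Complex.I / j) := rfl

lemma zetaU_pow_self {j : ℕ} (hj : 0 < j) : zetaU j ^ j = 1 := by
  ext
  rw [Units.val_pow_eq_pow_val, zetaU_coe, ← Complex.exp_nat_mul, Units.val_one]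
  rw [mul_div_assoc', mul_comm, mul_div_assoc, div_self (by exact_mod_cast hj.ne' : (j:ℂ) ≠ 0),
    mul_one, Complex.exp_two_pi_mul_I]

lemma zetaU_pow_dvd {j M : ℕ} (hj : 0 < j) (h : j ∣ M) : zetaU j ^ M = 1 := by
  obtain ⟨c, rfl⟩ := h
  rw [pow_mul, zetaU_pow_self hj, one_pow]

lemma sum_range_shift {A : Type*} [AddCommGroup A] (f : ℕ → A) (j : ℕ) (h : f j = f 0) :
    ∑ k ∈ Finset.range j, f (k + 1) = ∑ k ∈ Finset.range j, f k := by
  have h2 : (∑ k ∈ Finset.range j, f (k+1)) + f 0 = (∑ k ∈ Finset.range j, f k) + f j := by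
    rw [← Finset.sum_range_succ' f j, Finset.sum_range_succ f j]
  rw [h] at h2
  exact add_right_cancel h2

lemma of_zeta_mul_Eavg {j : ℕ} (hj : 0 < j) :
    MonoidAlgebra.of ℚ ℂˣ (zetaU j) * Eavg j = Eavg j := by
  unfold Eavg
  rw [mul_smul_comm, Finset.mul_sum]
  congr 1
  have : ∀ k, MonoidAlgebra.of ℚ ℂˣ (zetaU j) * MonoidAlgebra.of ℚ ℂˣ (zetaU j ^ k)
      = MonoidAlgebra.of ℚ ℂˣ (zetaU j ^ (k+1)) := by
    intro k; rw [← map_mul, pow_succ, mul_comm]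
  simp_rw [this]
  exact sum_range_shift (fun k => MonoidAlgebra.of ℚ ℂˣ (zetaU j ^ k)) j
    (by simp only [zetaU_pow_self hj, pow_zero])

lemma of_zeta_pow_mul_Eavg {j : ℕ} (hj : 0 < j) (t : ℕ) :
    MonoidAlgebra.of ℚ ℂˣ (zetaU j ^ t) * Eavg j = Eavg j := by
  induction t with
  | zero => rw [pow_zero, map_one, one_mul]
  | succ t ih => rw [pow_succ, mul_comm (zetaU j ^ t), map_mul, mul_assoc, ih, of_zeta_mul_Eavg hj]

lemma of_mul_Eavg {j : ℕ} (hj : 0 < j) {z : ℂˣ} (hz : z ^ j = 1) :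
    MonoidAlgebra.of ℚ ℂˣ z * Eavg j = Eavg j := by
  have hprim : IsPrimitiveRoot ((zetaU j : ℂ)) j := by
    rw [zetaU_coe]; exact Complex.isPrimitiveRoot_exp j hj.ne'
  have : NeZero j := ⟨hj.ne'⟩
  obtain ⟨t, -, ht⟩ := hprim.eq_pow_of_pow_eq_one (ξ := (z : ℂ))
    (by rw [← Units.val_pow_eq_pow_val, hz, Units.val_one])
  have hzt : zetaU j ^ t = z := by ext; rw [Units.val_pow_eq_pow_val]; exact ht
  rw [← hzt]; exact of_zeta_pow_mul_Eavg hj t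

lemma Eavg_mul_eq_self {M : ℕ} (hM : 0 < M) {X : MonoidAlgebra ℚ ℂˣ}
    (h : MonoidAlgebra.of ℚ ℂˣ (zetaU M) * X = X) : Eavg M * X = X := by
  have habs : ∀ c : ℕ, MonoidAlgebra.of ℚ ℂˣ (zetaU M ^ c) * X = X := by
    intro c
    induction c with
    | zero => rw [pow_zero, map_one, one_mul]
    | succ c ih => rw [pow_succ, mul_comm (zetaU M ^ c), map_mul, mul_assoc, ih, h]
  unfold Eavg
  rw [smul_mul_assoc, Finset.sum_mul]
  simp_rw [habs]
  rw [Finset.sum_const, Finset.card_range, ← Nat.cast_smul_eq_nsmul ℚ, ← smul_assoc, smul_eq_mul,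
    inv_mul_cancel₀ (by exact_mod_cast hM.ne' : (M:ℚ) ≠ 0), one_smul]

lemma zetaU_zpow_coe (j : ℕ) (n : ℤ) :
    ((zetaU j ^ n : ℂˣ) : ℂ) = Complex.exp (n * (2 * (Real.pi:ℂ) * Complex.I / j)) := by
  rw [Units.val_zpow_eq_zpow_val, zetaU_coe, ← Complex.exp_int_mul]

lemma zetaU_lcm_eq {k l : ℕ} (hk : 0 < k) (hl : 0 < l) :
    ∃ u v : ℤ, zetaU k ^ u * zetaU l ^ v = zetaU (Nat.lcm k l) := by
  set M := Nat.lcm k l with hMdef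
  have hM : 0 < M := Nat.lcm_pos hk hl
  set p := M / k with hp
  set q := M / l with hq
  have hkp : k * p = M := Nat.mul_div_cancel' (Nat.dvd_lcm_left k l)
  have hlq : l * q = M := Nat.mul_div_cancel' (Nat.dvd_lcm_right k l)
  have hg : Nat.gcd p q = 1 := by
    have h1 : p = l / Nat.gcd k l := by
      rw [hp, hMdef, Nat.lcm, Nat.mul_div_assoc k (Nat.gcd_dvd_right k l),
        Nat.mul_div_cancel_left _ hk]
    have h2 : q = k / Nat.gcd k l := by
      rw [hq, hMdef, Nat.lcm, mul_comm k l, Nat.mul_div_assoc l (Nat.gcd_dvd_left k l),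
        Nat.mul_div_cancel_left _ hl]
    rw [h1, h2, Nat.gcd_comm]
    exact Nat.coprime_div_gcd_div_gcd (Nat.gcd_pos_of_pos_left l hk)
  -- Bezout
  refine ⟨Int.gcdA p q, Int.gcdB p q, ?_⟩
  have hbez : (p : ℤ) * Int.gcdA p q + (q : ℤ) * Int.gcdB p q = 1 := by
    have := Int.gcd_eq_gcd_ab (p : ℤ) (q : ℤ)
    rw [Int.gcd_natCast_natCast, hg] at this
    exact_mod_cast this.symm
  ext
  rw [Units.val_mul, zetaU_zpow_coe, zetaU_zpow_coe, zetaU_coe, ← Complex.exp_add]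
  congr 1
  have hk0 : (k : ℂ) ≠ 0 := by exact_mod_cast hk.ne'
  have hl0 : (l : ℂ) ≠ 0 := by exact_mod_cast hl.ne'
  have hM0 : (M : ℂ) ≠ 0 := by exact_mod_cast hM.ne'
  have hkpC : (k : ℂ) * (p : ℂ) = (M : ℂ) := by exact_mod_cast congrArg (Nat.cast (R := ℂ)) hkp
  have hlqC : (l : ℂ) * (q : ℂ) = (M : ℂ) := by exact_mod_cast congrArg (Nat.cast (R := ℂ)) hlq
  have hbezC : (p : ℂ) * (Int.gcdA p q : ℂ) + (q : ℂ) * (Int.gcdB p q : ℂ) = 1 := by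
    exact_mod_cast hbez
  have hp0 : (p : ℂ) ≠ 0 := by
    intro h; rw [h, mul_zero] at hkpC; exact hM0 hkpC.symm
  have hq0 : (q : ℂ) ≠ 0 := by
    intro h; rw [h, mul_zero] at hlqC; exact hM0 hlqC.symm
  have e1 : (Int.gcdA p q : ℂ) / k = ((Int.gcdA p q : ℂ) * p) / M := by
    rw [← hkpC, mul_div_mul_right _ _ hp0]
  have e2 : (Int.gcdB p q : ℂ) / l = ((Int.gcdB p q : ℂ) * q) / M := by
    rw [← hlqC, mul_div_mul_right _ _ hq0]
  calc (Int.gcdA p q : ℂ) * (2 * (Real.pi:ℂ) * Complex.I / k)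
      + (Int.gcdB p q : ℂ) * (2 * (Real.pi:ℂ) * Complex.I / l)
      = 2 * (Real.pi:ℂ) * Complex.I * ((Int.gcdA p q : ℂ) / k)
        + 2 * (Real.pi:ℂ) * Complex.I * ((Int.gcdB p q : ℂ) / l) := by ring
    _ = 2 * (Real.pi:ℂ) * Complex.I *
        (((p:ℂ) * (Int.gcdA p q : ℂ) + (q:ℂ) * (Int.gcdB p q : ℂ)) / M) := by
        rw [e1, e2]; ring
    _ = 2 * (Real.pi:ℂ) * Complex.I / M := by rw [hbezC]; ring

lemma Eavg_mul_Eavg {k l : ℕ} (hk : 0 < k) (hl : 0 < l) :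
    Eavg k * Eavg l = Eavg (Nat.lcm k l) := by
  set M := Nat.lcm k l with hMdef
  have hM : 0 < M := Nat.lcm_pos hk hl
  -- step 1 : (Eavg k * Eavg l) * Eavg M = Eavg M
  have h1 : Eavg k * Eavg l * Eavg M = Eavg M := by
    rw [mul_assoc]
    rw [Eavg_mul_eq_self hl (of_mul_Eavg hM (zetaU_pow_dvd hl (Nat.dvd_lcm_right k l)))]
    exact Eavg_mul_eq_self hk (of_mul_Eavg hM (zetaU_pow_dvd hk (Nat.dvd_lcm_left k l)))
  -- step 2 : of (zetaU M) * (Eavg k * Eavg l) = Eavg k * Eavg l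
  obtain ⟨u, v, huv⟩ := zetaU_lcm_eq hk hl
  have h2 : MonoidAlgebra.of ℚ ℂˣ (zetaU M) * (Eavg k * Eavg l) = Eavg k * Eavg l := by
    rw [← huv, map_mul]
    have hu : MonoidAlgebra.of ℚ ℂˣ (zetaU k ^ u) * Eavg k = Eavg k :=
      of_mul_Eavg hk (by rw [← zpow_natCast, ← zpow_mul, mul_comm, zpow_mul, zpow_natCast,
        zetaU_pow_self hk, one_zpow])
    have hv : MonoidAlgebra.of ℚ ℂˣ (zetaU l ^ v) * Eavg l = Eavg l :=
      of_mul_Eavg hl (by rw [← zpow_natCast, ← zpow_mul, mul_comm, zpow_mul, zpow_natCast,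
        zetaU_pow_self hl, one_zpow])
    calc MonoidAlgebra.of ℚ ℂˣ (zetaU k ^ u) * MonoidAlgebra.of ℚ ℂˣ (zetaU l ^ v)
        * (Eavg k * Eavg l)
        = (MonoidAlgebra.of ℚ ℂˣ (zetaU k ^ u) * Eavg k)
          * (MonoidAlgebra.of ℚ ℂˣ (zetaU l ^ v) * Eavg l) := by ring
      _ = Eavg k * Eavg l := by rw [hu, hv]
  have h3 : Eavg M * (Eavg k * Eavg l) = Eavg k * Eavg l := Eavg_mul_eq_self hM h2
  rw [← h3, mul_comm (Eavg M), h1]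

lemma lcmL_pos {L : List ℕ} (hL : ∀ a ∈ L, 0 < a) : 0 < lcmL L := by
  induction L with
  | nil => simp [lcmL]
  | cons a L ih =>
    exact Nat.lcm_pos (hL a (by simp)) (ih fun b hb => hL b (List.mem_cons_of_mem a hb))

lemma dvd_lcmL {L : List ℕ} {a : ℕ} (ha : a ∈ L) : a ∣ lcmL L := by
  induction L with
  | nil => simp at ha
  | cons b L ih =>
    rcases List.mem_cons.mp ha with h | h
    · subst h; exact Nat.dvd_lcm_left _ _
    · exact dvd_trans (ih h) (Nat.dvd_lcm_right _ _)

lemma lcmL_append (L L' : List ℕ) : lcmL (L ++ L') = Nat.lcm (lcmL L) (lcmL L') := by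
  induction L with
  | nil => simp [lcmL, Nat.lcm_one_left]
  | cons a L ih =>
    show Nat.lcm a (lcmL (L ++ L')) = Nat.lcm (Nat.lcm a (lcmL L)) (lcmL L')
    rw [ih, Nat.lcm_assoc]

lemma chiL_eq (L : List ℕ) (j : ℕ) :
    chiL L j = 1 - ((L.filter (fun a => a ∣ j)).map (fun a : ℕ => 1 - (a : ℚ))).prod := by
  unfold chiL
  simp only [bind_pure_comp, List.map_eq_map, List.map_map]
  rfl

lemma chiL_gcd (L : List ℕ) {N : ℕ} (h : ∀ a ∈ L, a ∣ N) (t : ℕ) :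
    chiL L (Nat.gcd t N) = chiL L t := by
  have hfil : List.filter (fun a => decide (a ∣ Nat.gcd t N)) L
      = List.filter (fun a => decide (a ∣ t)) L := by
    apply List.filter_congr
    intro a ha
    simp only [decide_eq_decide, Nat.dvd_gcd_iff]
    exact and_iff_left (h a ha)
  rw [chiL_eq, chiL_eq, hfil]

lemma chiL_append (L L' : List ℕ) (t : ℕ) :
    chiL (L ++ L') t = chiL L t + chiL L' t - chiL L t * chiL L' t := by
  rw [chiL_eq, chiL_eq, chiL_eq, List.filter_append, List.map_append, List.prod_append]
  ring

lemma sL_eq_antidiag (L : List ℕ) (n : ℕ) :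
    ∑ x ∈ n.divisorsAntidiagonal, moebius x.fst • chiL L x.snd = sL L n := by
  rw [Nat.sum_divisorsAntidiagonal' (f := fun i j => (moebius i : ℤ) • chiL L j)]
  unfold sL
  apply Finset.sum_congr rfl
  intro d _
  rw [zsmul_eq_mul]

lemma sum_sL (L : List ℕ) : ∀ t > 0, ∑ d ∈ t.divisors, sL L d = chiL L t := by
  rw [sum_eq_iff_sum_smul_moebius_eq]
  intro n _
  rw [Nat.sum_divisorsAntidiagonal' (f := fun i j => (moebius i : ℤ) • chiL L j)]
  unfold sL
  apply Finset.sum_congr rfl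
  intro d _
  rw [zsmul_eq_mul]

lemma divisors_filter_dvd {x : ℕ} (hx : 0 < x) (y : ℕ) :
    x.divisors.filter (fun l => l ∣ y) = (Nat.gcd x y).divisors := by
  ext l
  simp only [Finset.mem_filter, Nat.mem_divisors, Nat.dvd_gcd_iff]
  constructor
  · rintro ⟨⟨h1, -⟩, h2⟩; exact ⟨⟨h1, h2⟩, Nat.gcd_ne_zero_left hx.ne'⟩
  · rintro ⟨⟨h1, h2⟩, -⟩; exact ⟨⟨h1, hx.ne'⟩, h2⟩

lemma sum_sL_filter (L : List ℕ) {N : ℕ} (hN : N = lcmL L) (hL : ∀ a ∈ L, 0 < a)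
    {t : ℕ} (ht : 0 < t) :
    ∑ j ∈ t.divisors.filter (fun l => l ∣ N), sL L j = chiL L t := by
  rw [divisors_filter_dvd ht N, sum_sL L _ (Nat.gcd_pos_of_pos_left N ht),
    chiL_gcd L (fun a ha => hN ▸ dvd_lcmL ha) t]

lemma sum_sL_dvdfilter (L : List ℕ) {x : ℕ} (hx : 0 < x) (y : ℕ) (hy : 0 < Nat.gcd x y) :
    ∑ j ∈ x.divisors.filter (fun l => l ∣ y), sL L j = chiL L (Nat.gcd x y) := by
  rw [divisors_filter_dvd hx y]
  exact sum_sL L _ hy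

lemma coeff_identity (L L' : List ℕ) (hL : ∀ a ∈ L, 0 < a) (hL' : ∀ a ∈ L', 0 < a) :
    ∀ l > 0,
      (if l ∣ lcmL L then sL L l else 0) + (if l ∣ lcmL L' then sL L' l else 0)
        - ∑ p ∈ ((lcmL L).divisors ×ˢ (lcmL L').divisors).filter
            (fun p => Nat.lcm p.1 p.2 = l), sL L p.1 * sL L' p.2
      = sL (L ++ L') l := by
  set N := lcmL L with hN
  set N' := lcmL L' with hN'
  have hNpos : 0 < N := lcmL_pos hL
  have hN'pos : 0 < N' := lcmL_pos hL'
  set f : ℕ → ℚ := fun l =>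
      (if l ∣ N then sL L l else 0) + (if l ∣ N' then sL L' l else 0)
        - ∑ p ∈ (N.divisors ×ˢ N'.divisors).filter
            (fun p => Nat.lcm p.1 p.2 = l), sL L p.1 * sL L' p.2 with hf
  have hdiv : ∀ n > 0, ∑ l ∈ n.divisors, f l = chiL (L ++ L') n := by
    intro n hn
    rw [hf]
    simp only
    rw [Finset.sum_sub_distrib, Finset.sum_add_distrib]
    -- S1
    have hS1 : ∑ l ∈ n.divisors, (if l ∣ N then sL L l else 0) = chiL L n := by
      rw [← Finset.sum_filter, sum_sL_dvdfilter L hn N (Nat.gcd_pos_of_pos_left N hn),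
        chiL_gcd L (fun a ha => hN ▸ dvd_lcmL ha) n]
    have hS2 : ∑ l ∈ n.divisors, (if l ∣ N' then sL L' l else 0) = chiL L' n := by
      rw [← Finset.sum_filter, sum_sL_dvdfilter L' hn N' (Nat.gcd_pos_of_pos_left N' hn),
        chiL_gcd L' (fun a ha => hN' ▸ dvd_lcmL ha) n]
    -- S3
    have hS3 : ∑ l ∈ n.divisors, ∑ p ∈ (N.divisors ×ˢ N'.divisors).filter
        (fun p => Nat.lcm p.1 p.2 = l), sL L p.1 * sL L' p.2
        = chiL L n * chiL L' n := by
      set Q := (N.divisors ×ˢ N'.divisors).filter (fun p => Nat.lcm p.1 p.2 ∣ n) with hQ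
      have hmaps : ∀ p ∈ Q, Nat.lcm p.1 p.2 ∈ n.divisors := by
        intro p hp
        rw [hQ, Finset.mem_filter] at hp
        exact Nat.mem_divisors.mpr ⟨hp.2, hn.ne'⟩
      have hfib := Finset.sum_fiberwise_of_maps_to hmaps (fun p => sL L p.1 * sL L' p.2)
      have hfilter_eq : ∀ l ∈ n.divisors,
          (Q.filter (fun p => Nat.lcm p.1 p.2 = l))
            = (N.divisors ×ˢ N'.divisors).filter (fun p => Nat.lcm p.1 p.2 = l) := by
        intro l hl
        rw [hQ, Finset.filter_filter]
        apply Finset.filter_congr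
        intro p _
        have hldvd : l ∣ n := (Nat.mem_divisors.mp hl).1
        constructor
        · rintro ⟨-, h⟩; exact h
        · intro h; exact ⟨h ▸ hldvd, h⟩
      calc ∑ l ∈ n.divisors, ∑ p ∈ (N.divisors ×ˢ N'.divisors).filter
            (fun p => Nat.lcm p.1 p.2 = l), sL L p.1 * sL L' p.2
          = ∑ l ∈ n.divisors, ∑ p ∈ Q.filter (fun p => Nat.lcm p.1 p.2 = l),
              sL L p.1 * sL L' p.2 := by
            exact Finset.sum_congr rfl fun l hl => by rw [hfilter_eq l hl]
        _ = ∑ p ∈ Q, sL L p.1 * sL L' p.2 := hfib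
        _ = ∑ p ∈ (N.divisors.filter (fun j => j ∣ n)) ×ˢ
              (N'.divisors.filter (fun j => j ∣ n)), sL L p.1 * sL L' p.2 := by
            rw [hQ, ← Finset.filter_product]
            apply Finset.sum_congr _ (fun _ _ => rfl)
            apply Finset.filter_congr
            intro p _
            exact Nat.lcm_dvd_iff
        _ = (∑ j ∈ N.divisors.filter (fun j => j ∣ n), sL L j)
            * (∑ j ∈ N'.divisors.filter (fun j => j ∣ n), sL L' j) := by
            rw [Finset.sum_mul_sum, Finset.sum_product]
        _ = chiL L n * chiL L' n := by
            rw [sum_sL_dvdfilter L hNpos n (Nat.gcd_pos_of_pos_left n hNpos),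
              sum_sL_dvdfilter L' hN'pos n (Nat.gcd_pos_of_pos_left n hN'pos),
              Nat.gcd_comm N n, Nat.gcd_comm N' n,
              chiL_gcd L (fun a ha => hN ▸ dvd_lcmL ha) n,
              chiL_gcd L' (fun a ha => hN' ▸ dvd_lcmL ha) n]
    rw [hS1, hS2, hS3, chiL_append]
  have := ArithmeticFunction.sum_eq_iff_sum_smul_moebius_eq
    (f := f) (g := chiL (L ++ L')) |>.mp hdiv
  intro l hl
  have h2 := this l hl
  rw [sL_eq_antidiag (L ++ L') l] at h2
  exact h2.symm

/-- The Milnor–Orlik multiplicativity lemma: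
`δ(a_0,…,a_m) · δ(a_0',…,a_{m'}') = δ(a_0,…,a_m,a_0',…,a_{m'}')` in `ℚ[ℂ*]`. -/
theorem stmt4 (L L' : List ℕ) (hL : ∀ a ∈ L, 0 < a) (hL' : ∀ a ∈ L', 0 < a) :
    deltaMO L * deltaMO L' = deltaMO (L ++ L') := by
  classical
  set N := lcmL L with hN
  set N' := lcmL L' with hN'
  set M := lcmL (L ++ L') with hMdef
  have hNpos : 0 < N := lcmL_pos hL
  have hN'pos : 0 < N' := lcmL_pos hL'
  have hMlcm : M = Nat.lcm N N' := lcmL_append L L'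
  have hMpos : 0 < M := hMlcm ▸ Nat.lcm_pos hNpos hN'pos
  set A := ∑ j ∈ N.divisors, sL L j • Eavg j with hA
  set B := ∑ j ∈ N'.divisors, sL L' j • Eavg j with hB
  set C := ∑ j ∈ M.divisors, sL (L ++ L') j • Eavg j with hC
  have hNM : N ∣ M := hMlcm ▸ Nat.dvd_lcm_left N N'
  have hN'M : N' ∣ M := hMlcm ▸ Nat.dvd_lcm_right N N'
  -- rewrite A over M.divisors
  have hdivset : ∀ {x : ℕ}, x ∣ M → 0 < x →
      x.divisors = M.divisors.filter (fun l => l ∣ x) := by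
    intro x hxM hx
    ext l
    simp only [Nat.mem_divisors, Finset.mem_filter]
    constructor
    · rintro ⟨h1, -⟩; exact ⟨⟨h1.trans hxM, hMpos.ne'⟩, h1⟩
    · rintro ⟨-, h⟩; exact ⟨h, hx.ne'⟩
  have hAM : A = ∑ l ∈ M.divisors, (if l ∣ N then sL L l else 0) • Eavg l := by
    rw [hA, hdivset hNM hNpos, Finset.sum_filter]
    exact Finset.sum_congr rfl fun l _ => by split <;> simp
  have hBM : B = ∑ l ∈ M.divisors, (if l ∣ N' then sL L' l else 0) • Eavg l := by
    rw [hB, hdivset hN'M hN'pos, Finset.sum_filter]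
    exact Finset.sum_congr rfl fun l _ => by split <;> simp
  -- product
  have hABprod : A * B = ∑ p ∈ N.divisors ×ˢ N'.divisors,
      (sL L p.1 * sL L' p.2) • Eavg (Nat.lcm p.1 p.2) := by
    rw [hA, hB, Finset.sum_mul_sum, Finset.sum_product]
    apply Finset.sum_congr rfl
    intro j hj
    apply Finset.sum_congr rfl
    intro k hk
    rw [smul_mul_smul_comm, Eavg_mul_Eavg (Nat.pos_of_mem_divisors hj)
      (Nat.pos_of_mem_divisors hk)]
  have hmaps : ∀ p ∈ N.divisors ×ˢ N'.divisors, Nat.lcm p.1 p.2 ∈ M.divisors := by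
    intro p hp
    rw [Finset.mem_product] at hp
    refine Nat.mem_divisors.mpr ⟨?_, hMpos.ne'⟩
    exact Nat.lcm_dvd ((Nat.mem_divisors.mp hp.1).1.trans hNM)
      ((Nat.mem_divisors.mp hp.2).1.trans hN'M)
  have hABM : A * B = ∑ l ∈ M.divisors,
      (∑ p ∈ (N.divisors ×ˢ N'.divisors).filter (fun p => Nat.lcm p.1 p.2 = l),
        sL L p.1 * sL L' p.2) • Eavg l := by
    rw [hABprod, ← Finset.sum_fiberwise_of_maps_to hmaps
      (fun p => (sL L p.1 * sL L' p.2) • Eavg (Nat.lcm p.1 p.2))]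
    apply Finset.sum_congr rfl
    intro l _
    rw [Finset.sum_smul]
    apply Finset.sum_congr rfl
    intro p hp
    rw [Finset.mem_filter] at hp
    rw [hp.2]
  -- key
  have key : A + B - A * B = C := by
    rw [hABM, hAM, hBM, hC, ← Finset.sum_add_distrib, ← Finset.sum_sub_distrib]
    apply Finset.sum_congr rfl
    intro l hl
    rw [← add_smul, ← sub_smul]
    congr 1
    exact coeff_identity L L' hL hL' l (Nat.pos_of_mem_divisors hl)
  -- assembly
  rw [deltaMO, deltaMO, deltaMO, smul_mul_smul_comm, ← hN, ← hN', ← hMdef, ← hA, ← hB, ← hC]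
  rw [← pow_add, ← List.length_append]
  congr 1
  rw [← key]
  ring
end

section
/- Let p be periodic with period p = lcm_j a_j and define integers r_d by s_d = d·r_d, where s_d arise from Möbius inversion of the Lefschetz numbers χ_j = 1 - ∏_{a_i|j}(1-a_i). Then the formal power series identity ∑_{j=1}^∞ (χ_j/j) t^j = -∑_{d | p} r_d log(1 - t^d) holds in ℚ[[t]], where χ_j depends only on j mod p via the divisibility pattern. -/
open ArithmeticFunction

/-- The formal power series `log(1 - t^d) = -∑_{k≥1} t^{dk}/k` in `ℚ[[t]]`. -/
noncomputable def logOneSubPow (d : ℕ) : PowerSeries ℚ :=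
  PowerSeries.mk fun m => if m ≠ 0 ∧ d ∣ m then -(1 / ((m / d : ℕ) : ℚ)) else 0

/-- With `χ_j = 1 - ∏_{a_i ∣ j}(1 - a_i)` periodic with period `p = lcm_j a_j`,
`s_d` its Möbius transform, and `s_d = d·r_d`, one has the formal power series identity
`∑_{j≥1} (χ_j/j) t^j = -∑_{d ∣ p} r_d log(1 - t^d)` in `ℚ[[t]]`. -/
theorem stmt8 (n : ℕ) (a : Fin (n + 1) → ℕ) (ha : ∀ j, 0 < a j)
    (χ s r : ℕ → ℤ)
    (hχ : ∀ j : ℕ, 0 < j →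
      χ j = 1 - ∏ i ∈ Finset.univ.filter (fun i => a i ∣ j), (1 - (a i : ℤ)))
    (hs : ∀ j : ℕ, 0 < j →
      s j = ∑ d ∈ j.divisors, (ArithmeticFunction.moebius (j / d)) * χ d)
    (hr : ∀ d : ℕ, 0 < d → s d = (d : ℤ) * r d) :
    (PowerSeries.mk fun j => if j = 0 then 0 else ((χ j : ℚ) / (j : ℚ)))
      = -∑ d ∈ (Finset.lcm Finset.univ a).divisors, (r d : ℚ) • logOneSubPow d := by
  set p := Finset.lcm Finset.univ a with hpdef
  have hp0 : 0 < p := by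
    rw [pos_iff_ne_zero]
    intro h
    have h0 : (0:ℕ) ∈ a '' ↑(Finset.univ : Finset (Fin (n+1))) :=
      Finset.lcm_eq_zero_iff.mp h
    obtain ⟨i, -, hi⟩ := h0
    exact (ha i).ne' hi
  -- χ depends only on gcd with p
  have hgcd : ∀ j : ℕ, 0 < j → χ j = χ (Nat.gcd j p) := by
    intro j hj
    have hg : 0 < Nat.gcd j p := Nat.gcd_pos_of_pos_left _ hj
    rw [hχ j hj, hχ _ hg]
    congr 2
    apply Finset.filter_congr
    intro i _
    constructor
    · intro h
      exact Nat.dvd_gcd h (Finset.dvd_lcm (Finset.mem_univ i))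
    · intro h
      exact h.trans (Nat.gcd_dvd_left _ _)
  -- Möbius inversion
  have hB : ∀ m : ℕ, 0 < m → ∑ d ∈ m.divisors, s d = χ m := by
    rw [ArithmeticFunction.sum_eq_iff_sum_mul_moebius_eq]
    intro m hm
    rw [hs m hm, ← Nat.sum_divisorsAntidiagonal' (f := fun x y => ((ArithmeticFunction.moebius x : ℤ)) * χ y)]
    simp
  -- key identity
  have hkey : ∀ m : ℕ, 0 < m →
      (χ m : ℤ) = ∑ d ∈ p.divisors.filter (· ∣ m), s d := by
    intro m hm
    have hg : 0 < Nat.gcd m p := Nat.gcd_pos_of_pos_left _ hm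
    rw [hgcd m hm, ← hB _ hg]
    apply Finset.sum_congr _ (fun _ _ => rfl)
    ext d
    simp only [Nat.mem_divisors, Finset.mem_filter, Nat.dvd_gcd_iff]
    constructor
    · rintro ⟨⟨h1, h2⟩, _⟩
      exact ⟨⟨h2, hp0.ne'⟩, h1⟩
    · rintro ⟨⟨h2, _⟩, h1⟩
      exact ⟨⟨h1, h2⟩, hg.ne'⟩
  ext m
  rw [PowerSeries.coeff_mk, map_neg, map_sum]
  rcases Nat.eq_zero_or_pos m with hm | hm
  · subst hm
    simp [logOneSubPow]
  · simp only [hm.ne', if_false]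
    have hterm : ∀ d ∈ p.divisors,
        (PowerSeries.coeff (R := ℚ) m) ((r d : ℚ) • logOneSubPow d)
          = if d ∣ m then -((r d : ℚ) / ((m / d : ℕ) : ℚ)) else 0 := by
      intro d hd
      rw [PowerSeries.coeff_smul, logOneSubPow, PowerSeries.coeff_mk]
      by_cases h : d ∣ m
      · simp [h, hm.ne', div_eq_mul_inv, mul_comm]
      · simp [h]
    rw [Finset.sum_congr rfl hterm]
    have hχm : (χ m : ℚ) = ∑ d ∈ p.divisors.filter (· ∣ m), ((d : ℚ) * (r d : ℚ)) := by
      rw [hkey m hm]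
      push_cast
      apply Finset.sum_congr rfl
      intro d hd
      have hd0 : 0 < d := Nat.pos_of_mem_divisors (Finset.mem_filter.mp hd).1
      rw [hr d hd0]
      push_cast
      ring
    rw [hχm, Finset.sum_div, ← Finset.sum_filter (fun x => x ∣ m)
      (fun d => -((r d : ℚ) / ((m / d : ℕ) : ℚ))),
      ← Finset.sum_neg_distrib]
    simp only [neg_neg]
    apply Finset.sum_congr rfl
    intro d hd
    obtain ⟨hdp, hdm⟩ := Finset.mem_filter.mp hd
    have hd0 : (0:ℚ) < (d:ℚ) := by
      exact_mod_cast Nat.pos_of_mem_divisors hdp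
    have hm0 : (0:ℚ) < (m:ℚ) := by exact_mod_cast hm
    rw [Nat.cast_div hdm (by positivity)]
    field_simp
end

section
/- For k ≥ 2, the Brieskorn 5-manifold Σ(p,3,3,3) with gcd(p,3) = 1 has H_2(Σ(p,3,3,3); ℤ) ≅ ℤ_p ⊕ ℤ_p, as computed by Randell's algorithm: the quantities C(I_s) defined recursively by C(∅) = gcd of all exponents and C(I_s) = gcd_{i ∈ I∖I_s}(a_i) / ∏_{I_t ⊊ I_s} C(I_t) satisfy C({0}) = 3, C({1,2,3}) = p, and C(I_s) = 1 for all other proper subsets I_s of {0,1,2,3}, with d_1 = d_2 = p. -/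
/-- The exponents `(p,3,3,3)` of the Brieskorn manifold `Σ(p,3,3,3)`. -/
def aBr (p : ℕ) : Fin 4 → ℕ := ![p, 3, 3, 3]

/-- `κ(I_s) = ∑_{I_t ⊆ I_s} (-1)^{s-t} (∏_{i ∈ I_t} a_i) / lcm_{i ∈ I_t} a_i`. -/
noncomputable def kappaBr (p : ℕ) (I : Finset (Fin 4)) : ℚ :=
  ∑ J ∈ I.powerset,
    (-1 : ℚ) ^ (I.card - J.card) * (∏ i ∈ J, (aBr p i : ℚ)) / ((J.lcm (aBr p) : ℕ) : ℚ)

/-- `k(I_s) = κ(I_s)` if `n+1-s` is odd, and `0` otherwise (here `n+1 = 4`). -/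
noncomputable def kBr (p : ℕ) (I : Finset (Fin 4)) : ℚ :=
  if (4 - I.card) % 2 = 1 then kappaBr p I else 0

/-- `d_j = ∏_{I_s : k(I_s) ≥ j} C(I_s)`. -/
noncomputable def dBr (p : ℕ) (C : Finset (Fin 4) → ℚ) (j : ℕ) : ℚ :=
  ∏ I ∈ (Finset.univ : Finset (Finset (Fin 4))).filter (fun I => (j : ℚ) ≤ kBr p I), C I

/-- Randell's algorithm for `Σ(p,3,3,3)` with `gcd(p,3) = 1`: the recursively defined
quantities satisfy `C({0}) = 3`, `C({1,2,3}) = p`, `C(I_s) = 1` for all other proper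
subsets, and `d_1 = d_2 = p` (whence `H_2(Σ(p,3,3,3);ℤ) ≅ ℤ_p ⊕ ℤ_p`). -/
theorem stmt10 (p : ℕ) (hp : 2 ≤ p) (hgcd : Nat.gcd p 3 = 1)
    (C : Finset (Fin 4) → ℚ)
    (hC0 : C ∅ = ((Finset.gcd Finset.univ (aBr p) : ℕ) : ℚ))
    (hC : ∀ I : Finset (Fin 4), I ≠ ∅ → I ≠ Finset.univ →
      C I = ((Finset.gcd (Finset.univ \ I) (aBr p) : ℕ) : ℚ) /
        ∏ J ∈ I.powerset.erase I, C J) :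
    C {0} = 3 ∧ C ({1, 2, 3} : Finset (Fin 4)) = p ∧
    (∀ I : Finset (Fin 4), I ≠ Finset.univ → I ≠ ({0} : Finset (Fin 4)) →
      I ≠ ({1, 2, 3} : Finset (Fin 4)) → C I = 1) ∧
    dBr p C 1 = p ∧ dBr p C 2 = p := by
  have hp0 : (p:ℚ) ≠ 0 := Nat.cast_ne_zero.mpr (by omega)
  -- gcd computations
  have gU : Finset.gcd (Finset.univ : Finset (Fin 4)) (aBr p) = 1 := by
    simp only [show (Finset.univ : Finset (Fin 4)) = {0,1,2,3} from rfl,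
      Finset.gcd_insert, Finset.gcd_singleton, aBr]
    show Nat.gcd p (Nat.gcd 3 (Nat.gcd 3 3)) = 1
    norm_num [hgcd]
  have g123 : Finset.gcd ({1,2,3} : Finset (Fin 4)) (aBr p) = 3 := by
    simp only [Finset.gcd_insert, Finset.gcd_singleton, aBr]
    show Nat.gcd 3 (Nat.gcd 3 3) = 3
    norm_num
  have g023 : Finset.gcd ({0,2,3} : Finset (Fin 4)) (aBr p) = 1 := by
    simp only [Finset.gcd_insert, Finset.gcd_singleton, aBr]
    show Nat.gcd p (Nat.gcd 3 3) = 1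
    norm_num [hgcd]
  have g013 : Finset.gcd ({0,1,3} : Finset (Fin 4)) (aBr p) = 1 := by
    simp only [Finset.gcd_insert, Finset.gcd_singleton, aBr]
    show Nat.gcd p (Nat.gcd 3 3) = 1
    norm_num [hgcd]
  have g012 : Finset.gcd ({0,1,2} : Finset (Fin 4)) (aBr p) = 1 := by
    simp only [Finset.gcd_insert, Finset.gcd_singleton, aBr]
    show Nat.gcd p (Nat.gcd 3 3) = 1
    norm_num [hgcd]
  have g23 : Finset.gcd ({2,3} : Finset (Fin 4)) (aBr p) = 3 := by
    simp only [Finset.gcd_insert, Finset.gcd_singleton, aBr]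
    show Nat.gcd 3 3 = 3
    norm_num
  have g13 : Finset.gcd ({1,3} : Finset (Fin 4)) (aBr p) = 3 := by
    simp only [Finset.gcd_insert, Finset.gcd_singleton, aBr]
    show Nat.gcd 3 3 = 3
    norm_num
  have g12 : Finset.gcd ({1,2} : Finset (Fin 4)) (aBr p) = 3 := by
    simp only [Finset.gcd_insert, Finset.gcd_singleton, aBr]
    show Nat.gcd 3 3 = 3
    norm_num
  have g03 : Finset.gcd ({0,3} : Finset (Fin 4)) (aBr p) = 1 := by
    simp only [Finset.gcd_insert, Finset.gcd_singleton, aBr]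
    show Nat.gcd p 3 = 1
    exact hgcd
  have g02 : Finset.gcd ({0,2} : Finset (Fin 4)) (aBr p) = 1 := by
    simp only [Finset.gcd_insert, Finset.gcd_singleton, aBr]
    show Nat.gcd p 3 = 1
    exact hgcd
  have g01 : Finset.gcd ({0,1} : Finset (Fin 4)) (aBr p) = 1 := by
    simp only [Finset.gcd_insert, Finset.gcd_singleton, aBr]
    show Nat.gcd p 3 = 1
    exact hgcd
  have g3 : Finset.gcd ({3} : Finset (Fin 4)) (aBr p) = 3 := by
    simp [aBr]
  have g2 : Finset.gcd ({2} : Finset (Fin 4)) (aBr p) = 3 := by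
    simp [aBr]
  have g1 : Finset.gcd ({1} : Finset (Fin 4)) (aBr p) = 3 := by
    simp [aBr]
  have g0 : Finset.gcd ({0} : Finset (Fin 4)) (aBr p) = p := by
    simp [aBr]
  -- C values
  have hE : C ∅ = 1 := by rw [hC0, gU]; norm_num
  have hs0 : C {0} = 3 := by
    rw [hC {0} (by decide) (by decide),
      show (Finset.univ \ ({0}:Finset (Fin 4))) = {1,2,3} from by decide, g123,
      show ({0}:Finset (Fin 4)).powerset.erase {0} = {∅} from by decide,
      Finset.prod_singleton, hE]
    norm_num
  have hs1 : C {1} = 1 := by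
    rw [hC {1} (by decide) (by decide),
      show (Finset.univ \ ({1}:Finset (Fin 4))) = {0,2,3} from by decide, g023,
      show ({1}:Finset (Fin 4)).powerset.erase {1} = {∅} from by decide,
      Finset.prod_singleton, hE]
    norm_num
  have hs2 : C {2} = 1 := by
    rw [hC {2} (by decide) (by decide),
      show (Finset.univ \ ({2}:Finset (Fin 4))) = {0,1,3} from by decide, g013,
      show ({2}:Finset (Fin 4)).powerset.erase {2} = {∅} from by decide,
      Finset.prod_singleton, hE]
    norm_num
  have hs3 : C {3} = 1 := by
    rw [hC {3} (by decide) (by decide),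
      show (Finset.univ \ ({3}:Finset (Fin 4))) = {0,1,2} from by decide, g012,
      show ({3}:Finset (Fin 4)).powerset.erase {3} = {∅} from by decide,
      Finset.prod_singleton, hE]
    norm_num
  have hp01 : C {0,1} = 1 := by
    rw [hC {0,1} (by decide) (by decide),
      show (Finset.univ \ ({0,1}:Finset (Fin 4))) = {2,3} from by decide, g23,
      show ({0,1}:Finset (Fin 4)).powerset.erase {0,1} = {∅,{0},{1}} from by decide,
      Finset.prod_insert (by decide), Finset.prod_insert (by decide),
      Finset.prod_singleton, hE, hs0, hs1]
    norm_num
  have hp02 : C {0,2} = 1 := by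
    rw [hC {0,2} (by decide) (by decide),
      show (Finset.univ \ ({0,2}:Finset (Fin 4))) = {1,3} from by decide, g13,
      show ({0,2}:Finset (Fin 4)).powerset.erase {0,2} = {∅,{0},{2}} from by decide,
      Finset.prod_insert (by decide), Finset.prod_insert (by decide),
      Finset.prod_singleton, hE, hs0, hs2]
    norm_num
  have hp03 : C {0,3} = 1 := by
    rw [hC {0,3} (by decide) (by decide),
      show (Finset.univ \ ({0,3}:Finset (Fin 4))) = {1,2} from by decide, g12,
      show ({0,3}:Finset (Fin 4)).powerset.erase {0,3} = {∅,{0},{3}} from by decide,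
      Finset.prod_insert (by decide), Finset.prod_insert (by decide),
      Finset.prod_singleton, hE, hs0, hs3]
    norm_num
  have hp12 : C {1,2} = 1 := by
    rw [hC {1,2} (by decide) (by decide),
      show (Finset.univ \ ({1,2}:Finset (Fin 4))) = {0,3} from by decide, g03,
      show ({1,2}:Finset (Fin 4)).powerset.erase {1,2} = {∅,{1},{2}} from by decide,
      Finset.prod_insert (by decide), Finset.prod_insert (by decide),
      Finset.prod_singleton, hE, hs1, hs2]
    norm_num
  have hp13 : C {1,3} = 1 := by
    rw [hC {1,3} (by decide) (by decide),
      show (Finset.univ \ ({1,3}:Finset (Fin 4))) = {0,2} from by decide, g02,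
      show ({1,3}:Finset (Fin 4)).powerset.erase {1,3} = {∅,{1},{3}} from by decide,
      Finset.prod_insert (by decide), Finset.prod_insert (by decide),
      Finset.prod_singleton, hE, hs1, hs3]
    norm_num
  have hp23 : C {2,3} = 1 := by
    rw [hC {2,3} (by decide) (by decide),
      show (Finset.univ \ ({2,3}:Finset (Fin 4))) = {0,1} from by decide, g01,
      show ({2,3}:Finset (Fin 4)).powerset.erase {2,3} = {∅,{2},{3}} from by decide,
      Finset.prod_insert (by decide), Finset.prod_insert (by decide),
      Finset.prod_singleton, hE, hs2, hs3]
    norm_num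
  have ht012 : C {0,1,2} = 1 := by
    rw [hC {0,1,2} (by decide) (by decide),
      show (Finset.univ \ ({0,1,2}:Finset (Fin 4))) = {3} from by decide, g3,
      show ({0,1,2}:Finset (Fin 4)).powerset.erase {0,1,2}
        = {∅,{0},{1},{2},{0,1},{0,2},{1,2}} from by decide,
      Finset.prod_insert (by decide), Finset.prod_insert (by decide),
      Finset.prod_insert (by decide), Finset.prod_insert (by decide),
      Finset.prod_insert (by decide), Finset.prod_insert (by decide),
      Finset.prod_singleton, hE, hs0, hs1, hs2, hp01, hp02, hp12]
    norm_num
  have ht013 : C {0,1,3} = 1 := by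
    rw [hC {0,1,3} (by decide) (by decide),
      show (Finset.univ \ ({0,1,3}:Finset (Fin 4))) = {2} from by decide, g2,
      show ({0,1,3}:Finset (Fin 4)).powerset.erase {0,1,3}
        = {∅,{0},{1},{3},{0,1},{0,3},{1,3}} from by decide,
      Finset.prod_insert (by decide), Finset.prod_insert (by decide),
      Finset.prod_insert (by decide), Finset.prod_insert (by decide),
      Finset.prod_insert (by decide), Finset.prod_insert (by decide),
      Finset.prod_singleton, hE, hs0, hs1, hs3, hp01, hp03, hp13]
    norm_num
  have ht023 : C {0,2,3} = 1 := by
    rw [hC {0,2,3} (by decide) (by decide),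
      show (Finset.univ \ ({0,2,3}:Finset (Fin 4))) = {1} from by decide, g1,
      show ({0,2,3}:Finset (Fin 4)).powerset.erase {0,2,3}
        = {∅,{0},{2},{3},{0,2},{0,3},{2,3}} from by decide,
      Finset.prod_insert (by decide), Finset.prod_insert (by decide),
      Finset.prod_insert (by decide), Finset.prod_insert (by decide),
      Finset.prod_insert (by decide), Finset.prod_insert (by decide),
      Finset.prod_singleton, hE, hs0, hs2, hs3, hp02, hp03, hp23]
    norm_num
  have ht123 : C {1,2,3} = p := by
    rw [hC {1,2,3} (by decide) (by decide),
      show (Finset.univ \ ({1,2,3}:Finset (Fin 4))) = {0} from by decide, g0,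
      show ({1,2,3}:Finset (Fin 4)).powerset.erase {1,2,3}
        = {∅,{1},{2},{3},{1,2},{1,3},{2,3}} from by decide,
      Finset.prod_insert (by decide), Finset.prod_insert (by decide),
      Finset.prod_insert (by decide), Finset.prod_insert (by decide),
      Finset.prod_insert (by decide), Finset.prod_insert (by decide),
      Finset.prod_singleton, hE, hs1, hs2, hs3, hp12, hp13, hp23]
    norm_num
  -- kappa values
  have hlcm : lcm p 3 = p * 3 := Nat.Coprime.lcm_eq_mul hgcd
  have k0 : kappaBr p {0} = 0 := by
    unfold kappaBr
    rw [show ({0}:Finset (Fin 4)).powerset = {∅,{0}} from by decide,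
      Finset.sum_insert (by decide), Finset.sum_singleton]
    simp [aBr]
    try field_simp
    norm_num
  have k1 : kappaBr p {1} = 0 := by
    unfold kappaBr
    rw [show ({1}:Finset (Fin 4)).powerset = {∅,{1}} from by decide,
      Finset.sum_insert (by decide), Finset.sum_singleton]
    simp [aBr]
    try field_simp
  have k2 : kappaBr p {2} = 0 := by
    unfold kappaBr
    rw [show ({2}:Finset (Fin 4)).powerset = {∅,{2}} from by decide,
      Finset.sum_insert (by decide), Finset.sum_singleton]
    simp [aBr]
    try field_simp
  have k3 : kappaBr p {3} = 0 := by
    unfold kappaBr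
    rw [show ({3}:Finset (Fin 4)).powerset = {∅,{3}} from by decide,
      Finset.sum_insert (by decide), Finset.sum_singleton]
    simp [aBr]
    try field_simp
  have k012 : kappaBr p {0,1,2} = 0 := by
    unfold kappaBr
    rw [show ({0,1,2}:Finset (Fin 4)).powerset
      = {∅,{0},{1},{2},{0,1},{0,2},{1,2},{0,1,2}} from by decide]
    rw [Finset.sum_insert (by decide), Finset.sum_insert (by decide),
      Finset.sum_insert (by decide), Finset.sum_insert (by decide),
      Finset.sum_insert (by decide), Finset.sum_insert (by decide),
      Finset.sum_insert (by decide), Finset.sum_singleton]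
    simp (config := { decide := true }) only [Finset.lcm_insert, Finset.lcm_singleton,
      Finset.prod_insert, Finset.prod_empty, Finset.prod_singleton, Finset.mem_insert,
      Finset.mem_singleton, aBr, Finset.card_insert_of_notMem, Finset.card_singleton,
      Finset.card_empty, Finset.notMem_singleton, Finset.notMem_empty, Matrix.cons_val]
    norm_num [hlcm]
    field_simp
    ring
  have k013 : kappaBr p {0,1,3} = 0 := by
    unfold kappaBr
    rw [show ({0,1,3}:Finset (Fin 4)).powerset
      = {∅,{0},{1},{3},{0,1},{0,3},{1,3},{0,1,3}} from by decide]
    rw [Finset.sum_insert (by decide), Finset.sum_insert (by decide),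
      Finset.sum_insert (by decide), Finset.sum_insert (by decide),
      Finset.sum_insert (by decide), Finset.sum_insert (by decide),
      Finset.sum_insert (by decide), Finset.sum_singleton]
    simp (config := { decide := true }) only [Finset.lcm_insert, Finset.lcm_singleton,
      Finset.prod_insert, Finset.prod_empty, Finset.prod_singleton, Finset.mem_insert,
      Finset.mem_singleton, aBr, Finset.card_insert_of_notMem, Finset.card_singleton,
      Finset.card_empty, Finset.notMem_singleton, Finset.notMem_empty, Matrix.cons_val]
    norm_num [hlcm]
    field_simp
    ring
  have k023 : kappaBr p {0,2,3} = 0 := by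
    unfold kappaBr
    rw [show ({0,2,3}:Finset (Fin 4)).powerset
      = {∅,{0},{2},{3},{0,2},{0,3},{2,3},{0,2,3}} from by decide]
    rw [Finset.sum_insert (by decide), Finset.sum_insert (by decide),
      Finset.sum_insert (by decide), Finset.sum_insert (by decide),
      Finset.sum_insert (by decide), Finset.sum_insert (by decide),
      Finset.sum_insert (by decide), Finset.sum_singleton]
    simp (config := { decide := true }) only [Finset.lcm_insert, Finset.lcm_singleton,
      Finset.prod_insert, Finset.prod_empty, Finset.prod_singleton, Finset.mem_insert,
      Finset.mem_singleton, aBr, Finset.card_insert_of_notMem, Finset.card_singleton,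
      Finset.card_empty, Finset.notMem_singleton, Finset.notMem_empty, Matrix.cons_val]
    norm_num [hlcm]
    field_simp
    ring
  have k123 : kappaBr p {1,2,3} = 2 := by
    unfold kappaBr
    rw [show ({1,2,3}:Finset (Fin 4)).powerset
      = {∅,{1},{2},{3},{1,2},{1,3},{2,3},{1,2,3}} from by decide]
    rw [Finset.sum_insert (by decide), Finset.sum_insert (by decide),
      Finset.sum_insert (by decide), Finset.sum_insert (by decide),
      Finset.sum_insert (by decide), Finset.sum_insert (by decide),
      Finset.sum_insert (by decide), Finset.sum_singleton]
    simp (config := { decide := true }) only [Finset.lcm_insert, Finset.lcm_singleton,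
      Finset.prod_insert, Finset.prod_empty, Finset.prod_singleton, Finset.mem_insert,
      Finset.mem_singleton, aBr, Finset.card_insert_of_notMem, Finset.card_singleton,
      Finset.card_empty, Finset.notMem_singleton, Finset.notMem_empty, Matrix.cons_val]
    norm_num
  -- kBr values
  have hk123 : kBr p {1,2,3} = 2 := by
    unfold kBr
    rw [if_pos (by decide)]
    exact k123
  have hk : ∀ I : Finset (Fin 4), I ≠ ({1,2,3} : Finset (Fin 4)) → kBr p I = 0 := by
    intro I hI
    fin_cases I <;>
      first
        | exact absurd (by decide) hI
        | (unfold kBr; rw [if_neg (by decide)])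
        | (unfold kBr; rw [if_pos (by decide)]
           first | exact k0 | exact k1 | exact k2 | exact k3
                 | exact k012 | exact k013 | exact k023)
  -- filters
  have hfilt : ∀ j : ℕ, 1 ≤ j → (j:ℚ) ≤ 2 →
      (Finset.univ : Finset (Finset (Fin 4))).filter (fun I => (j : ℚ) ≤ kBr p I)
        = {({1,2,3} : Finset (Fin 4))} := by
    intro j hj1 hj2
    ext I
    simp only [Finset.mem_filter, Finset.mem_univ, true_and, Finset.mem_singleton]
    constructor
    · intro h
      by_contra hne
      rw [hk I hne] at h
      have : (1:ℚ) ≤ (j:ℚ) := by exact_mod_cast hj1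
      linarith
    · intro h
      subst h
      rw [hk123]
      exact hj2
  refine ⟨hs0, ht123, ?_, ?_, ?_⟩
  · intro I h1 h2 h3
    fin_cases I <;>
      first
        | exact absurd (by decide) h1
        | exact absurd (by decide) h2
        | exact absurd (by decide) h3
        | exact hE | exact hs1 | exact hs2 | exact hs3
        | exact hp01 | exact hp02 | exact hp03 | exact hp12 | exact hp13 | exact hp23
        | exact ht012 | exact ht013 | exact ht023
  · unfold dBr
    rw [hfilt 1 le_rfl (by norm_num), Finset.prod_singleton, ht123]
  · unfold dBr
    rw [hfilt 2 (by norm_num) (by norm_num), Finset.prod_singleton, ht123]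
end
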